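/- Let p : U → X be a continuous surjective map of topological spaces, and assume U has only finitely many irreducible components. Assume that for every irreducible component W of X the preimage p⁻¹(W) is an irreducible subset of U. Then the maps W ↦ p⁻¹(W) and Z ↦ closure(p(Z)) are mutually inverse bijections between the set of irreducible components of X and the set of irreducible components of U. -/

import Mathlib

/-- if `p : U → X` is continuous and surjective, `U` has finitely many
irreducible components, and the preimage of every irreducible component of `X` is
irreducible, then `W ↦ p⁻¹(W)` and `Z ↦ closure (p(Z))` are mutually inverse bijections
between the irreducible components of `X` and those of `U`. -/
theorem components_bijection_of_preimage_irreducible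
    {U X : Type*} [TopologicalSpace U] [TopologicalSpace X]
    (p : U → X) (hp : Continuous p) (hsurj : Function.Surjective p)
    (hfin : (irreducibleComponents U).Finite)
    (hirr : ∀ W ∈ irreducibleComponents X, IsIrreducible (p ⁻¹' W)) :
    (∀ W ∈ irreducibleComponents X, p ⁻¹' W ∈ irreducibleComponents U) ∧
      (∀ Z ∈ irreducibleComponents U, closure (p '' Z) ∈ irreducibleComponents X) ∧
      (∀ W ∈ irreducibleComponents X, closure (p '' (p ⁻¹' W)) = W) ∧
      (∀ Z ∈ irreducibleComponents U, p ⁻¹' closure (p '' Z) = Z) := by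
  -- closure (p '' (p ⁻¹' W)) = W for closed W
  have key3 : ∀ W ∈ irreducibleComponents X, closure (p '' (p ⁻¹' W)) = W := by
    intro W hW
    rw [Set.image_preimage_eq W hsurj,
      (isClosed_of_mem_irreducibleComponents W hW).closure_eq]
  -- Claim 1
  have key1 : ∀ W ∈ irreducibleComponents X, p ⁻¹' W ∈ irreducibleComponents U := by
    intro W hW
    refine ⟨hirr W hW, fun Z hZ hsub => ?_⟩
    have hcl : IsIrreducible (closure (p '' Z)) :=
      (hZ.image p hp.continuousOn).closure
    have h1 : W ⊆ closure (p '' Z) := by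
      calc W = closure (p '' (p ⁻¹' W)) := (key3 W hW).symm
        _ ⊆ closure (p '' Z) := closure_mono (Set.image_mono hsub)
    have h2 : closure (p '' Z) ⊆ W := hW.2 hcl h1
    exact fun u hu => h2 (subset_closure (Set.mem_image_of_mem p hu))
  -- For each component Z of U, find a component W of X with Z = p ⁻¹' W
  have key : ∀ Z ∈ irreducibleComponents U,
      ∃ W ∈ irreducibleComponents X, Z = p ⁻¹' W ∧ closure (p '' Z) = W := by
    intro Z hZ
    have hcl : IsIrreducible (closure (p '' Z)) :=
      (hZ.1.image p hp.continuousOn).closure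
    obtain ⟨W, hWpre, hsub, hmax⟩ := exists_preirreducible _ hcl.2
    have hWirr : IsIrreducible W := ⟨hcl.1.mono hsub, hWpre⟩
    have hWmem : W ∈ irreducibleComponents X :=
      ⟨hWirr, fun u hu hWu => (hmax u hu.2 hWu).le⟩
    have hZsub : Z ⊆ p ⁻¹' W := by
      intro u hu
      exact hsub (subset_closure (Set.mem_image_of_mem p hu))
    have hZeq : Z = p ⁻¹' W := le_antisymm hZsub (hZ.2 (hirr W hWmem) hZsub)
    refine ⟨W, hWmem, hZeq, ?_⟩
    rw [hZeq, key3 W hWmem]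
  refine ⟨key1, ?_, key3, ?_⟩
  · intro Z hZ
    obtain ⟨W, hWmem, _, hWeq⟩ := key Z hZ
    rw [hWeq]; exact hWmem
  · intro Z hZ
    obtain ⟨W, hWmem, hZeq, hWeq⟩ := key Z hZ
    rw [hWeq, ← hZeq]
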